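/- Let ν ∈ {1, 2} and let V : ℤ^ν → ℝ be bounded. If the spectrum of H₀ + V is contained in [−2ν, 2ν], then V(n) = 0 for all n ∈ ℤ^ν. -/

import Mathlib

noncomputable section

open scoped ComplexConjugate

namespace DHKS

/-- The Hilbert space ℓ²(α; ℂ). -/
abbrev L2 (α : Type*) := lp (fun _ : α => ℂ) 2

variable {α β : Type*}

lemma memℓp_two_iff (f : α → ℂ) :
    Memℓp f 2 ↔ Summable (fun n => ‖f n‖ ^ (2 : ℝ)) := by
  rw [memℓp_gen_iff (by norm_num)]
  norm_num

lemma sum_sq_le (u : L2 α) (s : Finset α) :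
    ∑ n ∈ s, ‖(u : α → ℂ) n‖ ^ (2:ℝ) ≤ ‖u‖ ^ (2:ℝ) := by
  simpa using lp.sum_rpow_le_norm_rpow (p := 2) (by norm_num) u s

lemma norm_le_of_sum_sq (u : L2 α) {C : ℝ} (hC : 0 ≤ C)
    (h : ∀ s : Finset α, ∑ n ∈ s, ‖(u : α → ℂ) n‖ ^ (2:ℝ) ≤ C ^ (2:ℝ)) : ‖u‖ ≤ C := by
  refine lp.norm_le_of_forall_sum_le (p := 2) (by norm_num) hC ?_
  simpa using h

/-- Composition with an injective map, as a continuous linear map on ℓ². -/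
def compOp (σ : α → β) (hσ : Function.Injective σ) : L2 β →L[ℂ] L2 α :=
  LinearMap.mkContinuous
    { toFun := fun u => ⟨fun n => (u : β → ℂ) (σ n), by
        apply (memℓp_two_iff _).2
        exact ((memℓp_two_iff _).1 (lp.memℓp u)).comp_injective hσ⟩
      map_add' := by
        intro u v; apply lp.ext; funext n
        simp only [lp.coeFn_add, Pi.add_apply]
      map_smul' := by
        intro c u; apply lp.ext; funext n
        simp only [lp.coeFn_smul, Pi.smul_apply, RingHom.id_apply] }
    1 (by
      intro u
      rw [one_mul]
      refine norm_le_of_sum_sq _ (norm_nonneg u) (fun s => ?_)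
      classical
      calc ∑ n ∈ s, ‖(u : β → ℂ) (σ n)‖ ^ (2:ℝ)
          = ∑ m ∈ s.image σ, ‖(u : β → ℂ) m‖ ^ (2:ℝ) := by
            rw [Finset.sum_image (fun a _ b _ h => hσ h)]
        _ ≤ ‖u‖ ^ (2:ℝ) := sum_sq_le u _)

@[simp] lemma compOp_apply (σ : α → β) (hσ : Function.Injective σ) (u : L2 β) (n : α) :
    (compOp σ hσ u : α → ℂ) n = (u : β → ℂ) (σ n) := rfl

/-- Multiplication by a bounded real-valued function, as a continuous linear map on ℓ². -/
def mulOp (V : α → ℝ) (C : ℝ) (hC : ∀ n, |V n| ≤ C) : L2 α →L[ℂ] L2 α :=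
  LinearMap.mkContinuous
    { toFun := fun u => ⟨fun n => (V n : ℂ) * (u : α → ℂ) n, by
        apply (memℓp_two_iff _).2
        have h := (((memℓp_two_iff _).1 (lp.memℓp u)).mul_left ((max C 0) ^ (2:ℝ)))
        apply Summable.of_nonneg_of_le (fun n => by positivity) (fun n => ?_) h
        have h1 : ‖(V n : ℂ) * (u : α → ℂ) n‖ = |V n| * ‖(u : α → ℂ) n‖ := by
          rw [norm_mul, Complex.norm_real, Real.norm_eq_abs]
        rw [h1, Real.mul_rpow (abs_nonneg _) (norm_nonneg _)]
        have h3 : |V n| ^ (2:ℝ) ≤ (max C 0) ^ (2:ℝ) :=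
          Real.rpow_le_rpow (abs_nonneg _) (le_max_of_le_left (hC n)) (by norm_num)
        exact mul_le_mul_of_nonneg_right h3 (by positivity)⟩
      map_add' := by
        intro u v; apply lp.ext; funext n
        simp only [lp.coeFn_add, Pi.add_apply]
        ring
      map_smul' := by
        intro c u; apply lp.ext; funext n
        simp only [lp.coeFn_smul, Pi.smul_apply, RingHom.id_apply, smul_eq_mul]
        ring }
    (max C 0) (by
      intro u
      refine norm_le_of_sum_sq _ (by positivity) (fun s => ?_)
      have key : ∀ n ∈ s, ‖(V n : ℂ) * (u : α → ℂ) n‖ ^ (2:ℝ)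
          ≤ (max C 0) ^ (2:ℝ) * ‖(u : α → ℂ) n‖ ^ (2:ℝ) := by
        intro n _
        have h1 : ‖(V n : ℂ) * (u : α → ℂ) n‖ = |V n| * ‖(u : α → ℂ) n‖ := by
          rw [norm_mul, Complex.norm_real, Real.norm_eq_abs]
        rw [h1, Real.mul_rpow (abs_nonneg _) (norm_nonneg _)]
        have h3 : |V n| ^ (2:ℝ) ≤ (max C 0) ^ (2:ℝ) :=
          Real.rpow_le_rpow (abs_nonneg _) (le_max_of_le_left (hC n)) (by norm_num)
        exact mul_le_mul_of_nonneg_right h3 (by positivity)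
      calc ∑ n ∈ s, ‖(V n : ℂ) * (u : α → ℂ) n‖ ^ (2:ℝ)
          ≤ ∑ n ∈ s, (max C 0) ^ (2:ℝ) * ‖(u : α → ℂ) n‖ ^ (2:ℝ) := Finset.sum_le_sum key
        _ = (max C 0) ^ (2:ℝ) * ∑ n ∈ s, ‖(u : α → ℂ) n‖ ^ (2:ℝ) := by rw [Finset.mul_sum]
        _ ≤ (max C 0) ^ (2:ℝ) * ‖u‖ ^ (2:ℝ) :=
            mul_le_mul_of_nonneg_left (sum_sq_le u _) (by positivity)
        _ = (max C 0 * ‖u‖) ^ (2:ℝ) :=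
            (Real.mul_rpow (le_max_right _ _) (norm_nonneg _)).symm)

@[simp] lemma mulOp_apply (V : α → ℝ) (C : ℝ) (hC : ∀ n, |V n| ≤ C) (u : L2 α) (n : α) :
    (mulOp V C hC u : α → ℂ) n = (V n : ℂ) * (u : α → ℂ) n := rfl

/-- Extension by zero along an injective map, as a continuous linear map on ℓ². -/
def extOp (σ : α → β) (hσ : Function.Injective σ) : L2 α →L[ℂ] L2 β :=
  LinearMap.mkContinuous
    { toFun := fun u => ⟨Function.extend σ (u : α → ℂ) 0, by
        apply (memℓp_two_iff _).2
        have hpt : (fun b => ‖Function.extend σ (u : α → ℂ) 0 b‖ ^ (2:ℝ))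
            = Function.extend σ (fun a => ‖(u : α → ℂ) a‖ ^ (2:ℝ)) 0 := by
          funext b
          rcases em (∃ a, σ a = b) with ⟨a, rfl⟩ | hb
          · rw [hσ.extend_apply, hσ.extend_apply]
          · rw [Function.extend_apply' _ _ _ hb, Function.extend_apply' _ _ _ hb]
            simp [Real.zero_rpow (by norm_num : (2:ℝ) ≠ 0)]
        rw [hpt, summable_extend_zero hσ]
        exact (memℓp_two_iff _).1 (lp.memℓp u)⟩
      map_add' := by
        intro u v; apply lp.ext; funext b
        simp only [lp.coeFn_add, Pi.add_apply]
        rcases em (∃ a, σ a = b) with ⟨a, rfl⟩ | hb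
        · rw [hσ.extend_apply, hσ.extend_apply, hσ.extend_apply]
          simp [lp.coeFn_add]
        · rw [Function.extend_apply' _ _ _ hb, Function.extend_apply' _ _ _ hb,
            Function.extend_apply' _ _ _ hb]
          simp
      map_smul' := by
        intro c u; apply lp.ext; funext b
        simp only [lp.coeFn_smul, Pi.smul_apply, RingHom.id_apply, smul_eq_mul]
        rcases em (∃ a, σ a = b) with ⟨a, rfl⟩ | hb
        · rw [hσ.extend_apply, hσ.extend_apply]
          simp [lp.coeFn_smul]
        · rw [Function.extend_apply' _ _ _ hb, Function.extend_apply' _ _ _ hb]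
          simp }
    1 (by
      intro u
      rw [one_mul]
      refine norm_le_of_sum_sq _ (norm_nonneg u) (fun s => ?_)
      have hpt : (fun b => ‖Function.extend σ (u : α → ℂ) 0 b‖ ^ (2:ℝ))
          = Function.extend σ (fun a => ‖(u : α → ℂ) a‖ ^ (2:ℝ)) 0 := by
        funext b
        rcases em (∃ a, σ a = b) with ⟨a, rfl⟩ | hb
        · rw [hσ.extend_apply, hσ.extend_apply]
        · rw [Function.extend_apply' _ _ _ hb, Function.extend_apply' _ _ _ hb]
          simp [Real.zero_rpow (by norm_num : (2:ℝ) ≠ 0)]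
      have hsumm : Summable (fun a => ‖(u : α → ℂ) a‖ ^ (2:ℝ)) :=
        (memℓp_two_iff _).1 (lp.memℓp u)
      calc ∑ b ∈ s, ‖Function.extend σ (u : α → ℂ) 0 b‖ ^ (2:ℝ)
          ≤ ∑' b, ‖Function.extend σ (u : α → ℂ) 0 b‖ ^ (2:ℝ) := by
            refine Summable.sum_le_tsum s (fun b _ => by positivity) ?_
            rw [hpt, summable_extend_zero hσ]; exact hsumm
        _ = ∑' a, ‖(u : α → ℂ) a‖ ^ (2:ℝ) := by
            rw [hpt, tsum_extend_zero hσ]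
        _ = ‖u‖ ^ (2:ℝ) := by
            simpa using (lp.norm_rpow_eq_tsum (p := 2) (by norm_num) u).symm)

lemma extOp_apply (σ : α → β) (hσ : Function.Injective σ) (u : L2 α) (b : β) :
    (extOp σ hσ u : β → ℂ) b = Function.extend σ (u : α → ℂ) 0 b := rfl

/-- The real quadratic form ⟨φ, A φ⟩ of an operator. -/
def quadForm (A : L2 α →L[ℂ] L2 α) (φ : L2 α) : ℝ :=
  (inner ℂ φ (A φ) : ℂ).re

/-- `E` is an eigenvalue of the bounded operator `A`. -/
def IsEigenvalue (A : L2 α →L[ℂ] L2 α) (E : ℝ) : Prop :=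
  ∃ u : L2 α, u ≠ 0 ∧ A u = (E : ℂ) • u

lemma abs_mul_sq_le {γ x Cb : ℝ} (h : |x| ≤ Cb) : |γ * x ^ 2| ≤ |γ| * Cb ^ 2 := by
  have h1 := abs_le.1 h
  rw [abs_mul, abs_of_nonneg (sq_nonneg x)]
  exact mul_le_mul_of_nonneg_left (sq_le_sq' (by linarith [h1.1]) h1.2) (abs_nonneg γ)

end DHKS

namespace DHKS

/-! ## The lattice ℤ^ν -/

/-- The lattice `ℤ^ν`. -/
abbrev Zlat (ν : ℕ) := Fin ν → ℤ

/-- The ℓ¹-norm `|n|₁ = |n₁| + ⋯ + |n_ν|` of a lattice point. -/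
def normOne {ν : ℕ} (n : Zlat ν) : ℕ := ∑ i, (n i).natAbs

/-- The `i`-th standard unit vector in `ℤ^ν`. -/
def unitVec (ν : ℕ) (i : Fin ν) : Zlat ν := fun k => if k = i then 1 else 0

/-- The free discrete Schrödinger operator `(H₀ u)(n) = ∑_{|j|₁ = 1} u(n+j)`
on `ℓ²(ℤ^ν)`, written as the sum over translations by `± eᵢ`. -/
def H0 (ν : ℕ) : L2 (Zlat ν) →L[ℂ] L2 (Zlat ν) :=
  ∑ i : Fin ν,
    (compOp (fun n => n + unitVec ν i) (add_left_injective _) +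
      compOp (fun n => n + (-unitVec ν i)) (add_left_injective _))

lemma H0_apply {ν : ℕ} (u : L2 (Zlat ν)) (n : Zlat ν) :
    (H0 ν u : Zlat ν → ℂ) n =
      ∑ i : Fin ν, ((u : Zlat ν → ℂ) (n + unitVec ν i) + (u : Zlat ν → ℂ) (n - unitVec ν i)) := by
  rw [H0, ContinuousLinearMap.sum_apply, lp.coeFn_sum, Finset.sum_apply]
  simp [sub_eq_add_neg]

/-- The unitary `(U φ)(n) = (-1)^{|n|₁} φ(n)`. -/
def Uop (ν : ℕ) : L2 (Zlat ν) →L[ℂ] L2 (Zlat ν) :=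
  mulOp (fun n => (-1 : ℝ) ^ normOne n) 1 (fun n => by simp [abs_pow])

/-- The discrete Schrödinger operator `H = H₀ + V` on `ℓ²(ℤ^ν)`. -/
def schrodinger (ν : ℕ) (V : Zlat ν → ℝ) (C : ℝ) (hC : ∀ n, |V n| ≤ C) :
    L2 (Zlat ν) →L[ℂ] L2 (Zlat ν) :=
  H0 ν + mulOp V C hC

/-- The quantity `Δ(φ₊, φ₋; V) = ⟨φ₊, (H-2ν)φ₊⟩ + ⟨φ₋, (-H-2ν)φ₋⟩`. -/
def Delta (ν : ℕ) (V : Zlat ν → ℝ) (C : ℝ) (hC : ∀ n, |V n| ≤ C)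
    (φp φm : L2 (Zlat ν)) : ℝ :=
  quadForm (schrodinger ν V C hC - ((2 * (ν:ℝ) : ℝ) : ℂ) • 1) φp +
    quadForm (-schrodinger ν V C hC - ((2 * (ν:ℝ) : ℝ) : ℂ) • 1) φm

end DHKS

namespace DHKS

open Complex Finset

variable {α : Type*}

lemma summable_of_finsupp {g : α → ℝ} (s : Finset α) (hg : ∀ n ∉ s, g n = 0) :
    Summable g :=
  summable_of_ne_finset_zero (s := s) (fun b hb => hg b hb)

lemma memℓp_fin (f : α → ℂ) (s : Finset α) (hf : ∀ n ∉ s, f n = 0) : Memℓp f 2 :=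
  (memℓp_two_iff f).2 (summable_of_ne_finset_zero (s := s)
    (fun b hb => by simp [hf b hb]))

def fsVec (f : α → ℝ) (s : Finset α) (hf : ∀ n ∉ s, f n = 0) : L2 α :=
  ⟨fun n => (f n : ℂ), memℓp_fin _ s (fun n hn => by simp [hf n hn])⟩

@[simp] lemma fsVec_apply (f : α → ℝ) (s : Finset α) (hf : ∀ n ∉ s, f n = 0) (n : α) :
    (fsVec f s hf : α → ℂ) n = f n := rfl

lemma inner_L2 (u v : L2 α) :
    (inner ℂ u v : ℂ) = ∑' n, conj ((u : α → ℂ) n) * (v : α → ℂ) n := by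
  rw [lp.inner_eq_tsum]
  exact tsum_congr fun n => by rw [RCLike.inner_apply, mul_comm]

lemma norm_sq_L2 (u : L2 α) : ‖u‖ ^ 2 = (inner ℂ u u : ℂ).re := by
  rw [← inner_self_eq_norm_sq (𝕜 := ℂ)]; rfl
variable {ν : ℕ}

lemma compOp_inner_adj (a b : Zlat ν) (hab : a + b = 0) (u v : L2 (Zlat ν)) :
    (inner ℂ (compOp (fun n => n + a) (add_left_injective a) u) v : ℂ)
      = inner ℂ u (compOp (fun n => n + b) (add_left_injective b) v) := by
  rw [inner_L2, inner_L2]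
  have h := (Equiv.addRight a).tsum_eq
    (f := fun n => conj ((u : Zlat ν → ℂ) n) * (v : Zlat ν → ℂ) (n + b))
  simp only [Equiv.coe_addRight] at h
  simp only [compOp_apply]
  rw [← h]
  refine tsum_congr fun n => ?_
  have h2 : n + a + b = n := by rw [add_assoc, hab, add_zero]
  rw [h2]

lemma isSelfAdjoint_schrodinger (V : Zlat ν → ℝ) (C : ℝ) (hC : ∀ n, |V n| ≤ C) :
    IsSelfAdjoint (schrodinger ν V C hC) := by
  rw [ContinuousLinearMap.isSelfAdjoint_iff_isSymmetric]
  intro u v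
  show (inner ℂ (schrodinger ν V C hC u) v : ℂ) = inner ℂ u (schrodinger ν V C hC v)
  simp only [schrodinger, ContinuousLinearMap.add_apply, inner_add_left, inner_add_right]
  congr 1
  · -- H0 part
    simp only [H0, ContinuousLinearMap.sum_apply, sum_inner, inner_sum,
      ContinuousLinearMap.add_apply, inner_add_left, inner_add_right]
    refine Finset.sum_congr rfl fun i _ => ?_
    rw [compOp_inner_adj (unitVec ν i) (-unitVec ν i) (add_neg_cancel _),
      compOp_inner_adj (-unitVec ν i) (unitVec ν i) (neg_add_cancel _)]
    ring
  · -- V part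
    rw [inner_L2, inner_L2]
    refine tsum_congr fun n => ?_
    rw [mulOp_apply, mulOp_apply]
    rw [map_mul, Complex.conj_ofReal]
    ring
lemma norm_schrodinger_le (V : Zlat ν → ℝ) (C : ℝ) (hC : ∀ n, |V n| ≤ C)
    (hspec : spectrum ℂ (schrodinger ν V C hC) ⊆
      (fun x : ℝ => (x : ℂ)) '' Set.Icc (-(2 * (ν:ℝ))) (2 * (ν:ℝ))) :
    ‖schrodinger ν V C hC‖ ≤ 2 * ν := by
  have hsa := isSelfAdjoint_schrodinger V C hC
  have h1 : spectralRadius ℂ (schrodinger ν V C hC) ≤ (‖(2 * (ν:ℝ))‖₊ : ENNReal) := by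
    refine iSup₂_le fun k hk => ?_
    obtain ⟨x, hx, rfl⟩ := hspec hk
    rw [ENNReal.coe_le_coe]
    have : ‖((x:ℝ) : ℂ)‖ ≤ ‖(2 * (ν:ℝ))‖ := by
      rw [Complex.norm_real, Real.norm_eq_abs, Real.norm_eq_abs]
      rw [_root_.abs_of_nonneg (by positivity : (0:ℝ) ≤ 2 * ν)]
      exact abs_le.2 ⟨by linarith [hx.1], hx.2⟩
    exact this
  rw [hsa.spectralRadius_eq_nnnorm, ENNReal.coe_le_coe] at h1
  calc ‖schrodinger ν V C hC‖ ≤ ‖(2 * (ν:ℝ))‖ := h1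
    _ = 2 * ν := by rw [Real.norm_eq_abs, _root_.abs_of_nonneg (by positivity)]

lemma key_ineq (V : Zlat ν → ℝ) (C : ℝ) (hC : ∀ n, |V n| ≤ C)
    (hspec : spectrum ℂ (schrodinger ν V C hC) ⊆
      (fun x : ℝ => (x : ℂ)) '' Set.Icc (-(2 * (ν:ℝ))) (2 * (ν:ℝ)))
    (u : L2 (Zlat ν)) :
    |(inner ℂ u (schrodinger ν V C hC u) : ℂ).re| ≤ 2 * ν * ‖u‖ ^ 2 := by
  calc |(inner ℂ u (schrodinger ν V C hC u) : ℂ).re|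
      ≤ ‖(inner ℂ u (schrodinger ν V C hC u) : ℂ)‖ := Complex.abs_re_le_norm _
    _ ≤ ‖u‖ * ‖schrodinger ν V C hC u‖ := norm_inner_le_norm _ _
    _ ≤ ‖u‖ * (‖schrodinger ν V C hC‖ * ‖u‖) := by
        gcongr; exact (schrodinger ν V C hC).le_opNorm u
    _ ≤ ‖u‖ * (2 * ν * ‖u‖) := by
        have := norm_schrodinger_le V C hC hspec
        gcongr
    _ = 2 * ν * ‖u‖ ^ 2 := by ring
lemma tsum_shift (F : Zlat ν → ℝ) (a : Zlat ν) : ∑' n, F (n + a) = ∑' n, F n := by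
  have h := (Equiv.addRight a).tsum_eq (f := F)
  simpa using h

lemma norm_fsVec_sq (f : Zlat ν → ℝ) (s : Finset (Zlat ν)) (hf : ∀ n ∉ s, f n = 0) :
    ‖fsVec f s hf‖ ^ 2 = ∑' n, f n ^ 2 := by
  rw [norm_sq_L2, inner_L2]
  have h : ∀ n, conj ((fsVec f s hf : Zlat ν → ℂ) n) * (fsVec f s hf : Zlat ν → ℂ) n
      = ((f n ^ 2 : ℝ) : ℂ) := by
    intro n; rw [fsVec_apply, Complex.conj_ofReal]; push_cast; ring
  rw [tsum_congr h, ← Complex.ofReal_tsum, Complex.ofReal_re]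

lemma quad_eq (V : Zlat ν → ℝ) (C : ℝ) (hC : ∀ n, |V n| ≤ C)
    (f : Zlat ν → ℝ) (s : Finset (Zlat ν)) (hf : ∀ n ∉ s, f n = 0) :
    (inner ℂ (fsVec f s hf) (schrodinger ν V C hC (fsVec f s hf)) : ℂ).re
      = (∑ i : Fin ν, 2 * ∑' n, f n * f (n + unitVec ν i)) + ∑' n, V n * f n ^ 2 := by
  have hs : ∀ w : Zlat ν → ℝ, Summable (fun n => f n * w n) := fun w =>
    summable_of_finsupp s (fun n hn => by rw [hf n hn, zero_mul])
  have hterm : ∀ n, conj ((fsVec f s hf : Zlat ν → ℂ) n)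
        * ((schrodinger ν V C hC (fsVec f s hf)) : Zlat ν → ℂ) n
      = ((f n * ((∑ i : Fin ν, (f (n + unitVec ν i) + f (n - unitVec ν i))) + V n * f n)
          : ℝ) : ℂ) := by
    intro n
    have h1 : ((schrodinger ν V C hC (fsVec f s hf)) : Zlat ν → ℂ) n
        = (H0 ν (fsVec f s hf) : Zlat ν → ℂ) n
          + (mulOp V C hC (fsVec f s hf) : Zlat ν → ℂ) n := by
      rw [schrodinger]
      simp [ContinuousLinearMap.add_apply, lp.coeFn_add]
    rw [h1, H0_apply, mulOp_apply]
    simp only [fsVec_apply, Complex.conj_ofReal]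
    push_cast
    ring
  rw [inner_L2, tsum_congr hterm, ← Complex.ofReal_tsum, Complex.ofReal_re]
  have hpt : ∀ n, f n * ((∑ i : Fin ν, (f (n + unitVec ν i) + f (n - unitVec ν i))) + V n * f n)
      = (∑ i : Fin ν, (f n * f (n + unitVec ν i) + f n * f (n - unitVec ν i))) + V n * f n ^ 2 := by
    intro n; rw [mul_add, Finset.mul_sum]
    congr 1
    · exact Finset.sum_congr rfl fun i _ => by ring
    · ring
  rw [tsum_congr hpt]
  have hsumA : ∀ i : Fin ν,
      Summable (fun n => f n * f (n + unitVec ν i) + f n * f (n - unitVec ν i)) :=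
    fun i => ((hs _).add (hs _))
  rw [Summable.tsum_add (summable_sum (fun i _ => hsumA i)) (by
    have := summable_of_finsupp (g := fun n => V n * f n ^ 2) s
      (fun n hn => by simp [hf n hn])
    exact this)]
  congr 1
  rw [Summable.tsum_finsetSum (fun i _ => hsumA i)]
  refine Finset.sum_congr rfl fun i _ => ?_
  rw [Summable.tsum_add (hs _) (hs _)]
  have hshift : ∑' n, f n * f (n - unitVec ν i) = ∑' n, f n * f (n + unitVec ν i) := by
    have h := tsum_shift (F := fun m => f (m + unitVec ν i) * f m) (a := -unitVec ν i)
    calc ∑' n, f n * f (n - unitVec ν i)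
        = ∑' n, f (n + -unitVec ν i + unitVec ν i) * f (n + -unitVec ν i) := by
          refine tsum_congr fun n => ?_
          rw [neg_add_cancel_right, sub_eq_add_neg]
      _ = ∑' n, f (n + unitVec ν i) * f n := h
      _ = ∑' n, f n * f (n + unitVec ν i) := tsum_congr fun n => mul_comm _ _
  rw [hshift]; ring
lemma normOne_erase (m : Zlat ν) (i : Fin ν) :
    normOne m = (m i).natAbs + ∑ k ∈ Finset.univ.erase i, (m k).natAbs := by
  rw [normOne, ← Finset.add_sum_erase _ _ (Finset.mem_univ i)]

lemma normOne_add_unitVec (m : Zlat ν) (i : Fin ν) :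
    normOne (m + unitVec ν i)
      = (m i + 1).natAbs + ∑ k ∈ Finset.univ.erase i, (m k).natAbs := by
  rw [normOne_erase _ i]
  congr 1
  · simp [unitVec]
  · refine Finset.sum_congr rfl fun k hk => ?_
    have hki : k ≠ i := (Finset.mem_erase.1 hk).1
    simp [unitVec, hki]

lemma eps_sq (B : ℕ) : (-1:ℝ) ^ B * (-1:ℝ) ^ B = 1 := by
  rw [← pow_add]
  exact Even.neg_one_pow ⟨B, rfl⟩

lemma eps_flip (m : Zlat ν) (i : Fin ν) :
    (-1:ℝ) ^ normOne (m + unitVec ν i) = -(-1:ℝ) ^ normOne m := by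
  have h1 := normOne_add_unitVec m i
  have h2 := normOne_erase m i
  have hodd : (normOne (m + unitVec ν i) + normOne m) % 2 = 1 := by omega
  have hA : (-1:ℝ) ^ normOne (m + unitVec ν i) * (-1:ℝ) ^ normOne m = -1 := by
    rw [← pow_add]
    exact Odd.neg_one_pow (Nat.odd_iff.2 hodd)
  calc (-1:ℝ) ^ normOne (m + unitVec ν i)
      = (-1:ℝ) ^ normOne (m + unitVec ν i) * ((-1:ℝ) ^ normOne m * (-1:ℝ) ^ normOne m) := by
        rw [eps_sq, mul_one]
    _ = ((-1:ℝ) ^ normOne (m + unitVec ν i) * (-1:ℝ) ^ normOne m) * (-1:ℝ) ^ normOne m := by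
        ring
    _ = -(-1:ℝ) ^ normOne m := by rw [hA]; ring

lemma abs_P_le_D (V : Zlat ν → ℝ) (C : ℝ) (hC : ∀ n, |V n| ≤ C)
    (hspec : spectrum ℂ (schrodinger ν V C hC) ⊆
      (fun x : ℝ => (x : ℂ)) '' Set.Icc (-(2 * (ν:ℝ))) (2 * (ν:ℝ)))
    (f : Zlat ν → ℝ) (s : Finset (Zlat ν)) (hf : ∀ n ∉ s, f n = 0) :
    |∑' n, V n * f n ^ 2| ≤ ∑ i : Fin ν, ∑' n, (f (n + unitVec ν i) - f n) ^ 2 := by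
  classical
  have hs : ∀ w : Zlat ν → ℝ, Summable (fun n => f n * w n) := fun w =>
    summable_of_finsupp s (fun n hn => by rw [hf n hn, zero_mul])
  have hsN : Summable (fun n => f n ^ 2) :=
    summable_of_finsupp s (fun n hn => by simp [hf n hn])
  have hD : ∀ i : Fin ν, ∑' n, (f (n + unitVec ν i) - f n) ^ 2
      = 2 * (∑' n, f n ^ 2) - 2 * ∑' n, f n * f (n + unitVec ν i) := by
    intro i
    have hs1 : Summable (fun n => f (n + unitVec ν i) ^ 2) := by
      refine summable_of_finsupp (s.image (fun m => m - unitVec ν i)) (fun n hn => ?_)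
      have : f (n + unitVec ν i) = 0 := by
        by_contra hne
        have hmem : n + unitVec ν i ∈ s := by
          by_contra hmem; exact hne (hf _ hmem)
        exact hn (Finset.mem_image.2 ⟨n + unitVec ν i, hmem, by rw [add_sub_cancel_right]⟩)
      simp [this]
    have hpt : ∀ n, (f (n + unitVec ν i) - f n) ^ 2
        = (f (n + unitVec ν i) ^ 2 + f n ^ 2) - 2 * (f n * f (n + unitVec ν i)) := by
      intro n; ring
    rw [tsum_congr hpt, Summable.tsum_sub (hs1.add hsN) ((hs _).mul_left 2),
      Summable.tsum_add hs1 hsN, tsum_mul_left]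
    have hsh : ∑' n, f (n + unitVec ν i) ^ 2 = ∑' n, f n ^ 2 :=
      tsum_shift (fun n => f n ^ 2) (unitVec ν i)
    rw [hsh]; ring
  have k1 := key_ineq V C hC hspec (fsVec f s hf)
  rw [quad_eq V C hC f s hf, norm_fsVec_sq] at k1
  set g : Zlat ν → ℝ := fun n => (-1:ℝ) ^ normOne n * f n with hg
  have hgsupp : ∀ n ∉ s, g n = 0 := fun n hn => by simp [hg, hf n hn]
  have k2 := key_ineq V C hC hspec (fsVec g s hgsupp)
  rw [quad_eq V C hC g s hgsupp, norm_fsVec_sq] at k2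
  have hgsq : ∀ n, g n ^ 2 = f n ^ 2 := by
    intro n
    simp only [hg]
    rw [mul_pow, sq ((-1:ℝ) ^ normOne n), eps_sq, one_mul]
  have hgS : ∀ i : Fin ν, ∑' n, g n * g (n + unitVec ν i)
      = -∑' n, f n * f (n + unitVec ν i) := by
    intro i
    rw [← tsum_neg]
    refine tsum_congr fun n => ?_
    simp only [hg]
    rw [eps_flip]
    calc (-1:ℝ) ^ normOne n * f n * (-(-1:ℝ) ^ normOne n * f (n + unitVec ν i))
        = -(((-1:ℝ) ^ normOne n * (-1:ℝ) ^ normOne n) * (f n * f (n + unitVec ν i))) := by ring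
      _ = -(f n * f (n + unitVec ν i)) := by rw [eps_sq, one_mul]
  have hP2 : ∑' n, V n * g n ^ 2 = ∑' n, V n * f n ^ 2 :=
    tsum_congr fun n => by rw [hgsq n]
  have hN2 : ∑' n, g n ^ 2 = ∑' n, f n ^ 2 := tsum_congr fun n => hgsq n
  rw [hP2, hN2] at k2
  simp only [hgS] at k2
  have hDsum : ∑ i : Fin ν, ∑' n, (f (n + unitVec ν i) - f n) ^ 2
      = 2 * ν * (∑' n, f n ^ 2) - ∑ i : Fin ν, 2 * ∑' n, f n * f (n + unitVec ν i) := by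
    rw [Finset.sum_congr rfl (fun i _ => hD i), Finset.sum_sub_distrib, Finset.sum_const,
      Finset.card_univ, Fintype.card_fin, nsmul_eq_mul]
    ring
  have h2 : ∑ i : Fin ν, 2 * -(∑' n, f n * f (n + unitVec ν i))
      = -∑ i : Fin ν, 2 * ∑' n, f n * f (n + unitVec ν i) := by
    rw [← Finset.sum_neg_distrib]
    exact Finset.sum_congr rfl fun i _ => by ring
  rw [h2] at k2
  rw [abs_le] at k1 k2
  rw [abs_le]
  constructor
  · linarith [k2.1]
  · linarith [k1.2]
/-- step sizes of the radial profile -/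
def dd (R k : ℕ) : ℝ := if k = 0 ∨ R ≤ k then 0 else ((k : ℝ) + 1)⁻¹

/-- the radial profile: tail sums of `dd` -/
def gg (R r : ℕ) : ℝ := ∑ k ∈ Finset.Ico r R, dd R k

lemma dd_nonneg (R k : ℕ) : 0 ≤ dd R k := by
  unfold dd; split <;> positivity

lemma dd_le (R k : ℕ) : dd R k ≤ ((k : ℝ) + 1)⁻¹ := by
  unfold dd; split
  · positivity
  · exact le_refl _

lemma gg_nonneg (R r : ℕ) : 0 ≤ gg R r := Finset.sum_nonneg fun k _ => dd_nonneg R k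

lemma gg_of_le (R r : ℕ) (h : R ≤ r) : gg R r = 0 := by
  unfold gg
  rw [Finset.Ico_eq_empty (by omega), Finset.sum_empty]

lemma gg_step (R r : ℕ) : gg R r - gg R (r + 1) = dd R r := by
  rcases lt_or_ge r R with h | h
  · unfold gg
    rw [Finset.sum_eq_sum_Ico_succ_bot h]
    ring
  · rw [gg_of_le R r h, gg_of_le R (r + 1) (by omega)]
    unfold dd
    rw [if_pos (Or.inr h)]
    ring

lemma gg_one (R : ℕ) : gg R 1 = gg R 0 := by
  have h := gg_step R 0
  unfold dd at h
  simp at h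
  linarith
lemma normOne_step (m : Zlat ν) (i : Fin ν) :
    normOne (m + unitVec ν i) = normOne m + 1 ∨ normOne (m + unitVec ν i) + 1 = normOne m := by
  have h1 := normOne_add_unitVec m i
  have h2 := normOne_erase m i
  omega

lemma le_normOne (m : Zlat ν) (i : Fin ν) : (m i).natAbs ≤ normOne m :=
  Finset.single_le_sum (f := fun k => (m k).natAbs) (fun k _ => Nat.zero_le _)
    (Finset.mem_univ i)

lemma normOne_zero : normOne (0 : Zlat ν) = 0 := by simp [normOne]

lemma normOne_unitVec (i : Fin ν) : normOne (unitVec ν i) = 1 := by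
  unfold normOne unitVec
  have h : ∀ k : Fin ν, (if k = i then (1:ℤ) else 0).natAbs = if k = i then 1 else 0 := by
    intro k; split <;> rfl
  rw [Finset.sum_congr rfl fun k _ => h k, Finset.sum_ite_eq' Finset.univ i (fun _ => 1)]
  simp

lemma normOne_neg (m : Zlat ν) : normOne (-m) = normOne m := by
  unfold normOne
  exact Finset.sum_congr rfl fun k _ => by simp

/-- the sphere of radius `r` in `ℤ^ν`, `ν ∈ {1,2}`, has at most `4r+2` points -/
lemma card_sphere_le (hν : ν = 1 ∨ ν = 2) (r : ℕ) (t : Finset (Zlat ν))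
    (ht : ∀ m ∈ t, normOne m = r) : t.card ≤ 4 * r + 2 := by
  classical
  have hcard : ((Finset.Icc (-(r:ℤ)) r) ×ˢ ({true, false} : Finset Bool)).card
      = (2 * r + 1) * 2 := by
    rw [Finset.card_product, Int.card_Icc]
    have h2 : ({true, false} : Finset Bool).card = 2 := by decide
    rw [h2]
    omega
  rcases hν with h | h
  · subst h
    set F : Zlat 1 → ℤ × Bool := fun m => ((m 0 : ℤ), true) with hF
    have hmem : ∀ m ∈ t, F m ∈ (Finset.Icc (-(r:ℤ)) r) ×ˢ ({true, false} : Finset Bool) := by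
      intro m hm
      have hr := ht m hm
      rw [normOne, Fin.sum_univ_one] at hr
      have hmi : m 0 ∈ Finset.Icc (-(r:ℤ)) r := Finset.mem_Icc.2 (by omega)
      exact Finset.mem_product.2 ⟨hmi, by simp [hF]⟩
    have hinj : Set.InjOn F t := by
      intro a ha b hb hab
      funext k
      have h0 : a 0 = b 0 := by simpa [hF] using congrArg Prod.fst hab
      have hk : k = 0 := Subsingleton.elim _ _
      rw [hk, h0]
    have := Finset.card_le_card_of_injOn F hmem hinj
    omega
  · subst h
    set F : Zlat 2 → ℤ × Bool := fun m => ((m 0 : ℤ), decide (0 ≤ m 1)) with hF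
    have hmem : ∀ m ∈ t, F m ∈ (Finset.Icc (-(r:ℤ)) r) ×ˢ ({true, false} : Finset Bool) := by
      intro m hm
      have hr := ht m hm
      rw [normOne, Fin.sum_univ_two] at hr
      have hmi : m 0 ∈ Finset.Icc (-(r:ℤ)) r := Finset.mem_Icc.2 (by omega)
      refine Finset.mem_product.2 ⟨hmi, ?_⟩
      rcases Bool.eq_false_or_eq_true (decide (0 ≤ m 1)) with h | h <;> simp [hF, h]
    have hinj : Set.InjOn F t := by
      intro a ha b hb hab
      have ha' := ht a ha
      have hb' := ht b hb
      rw [normOne, Fin.sum_univ_two] at ha' hb'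
      have h0 : a 0 = b 0 := by simpa [hF] using congrArg Prod.fst hab
      have h1 : decide (0 ≤ a 1) = decide (0 ≤ b 1) := by
        simpa [hF] using congrArg Prod.snd hab
      have h1' : (0 ≤ a 1) ↔ (0 ≤ b 1) := by
        constructor <;> intro hx <;> simp_all
      have h2 : a 1 = b 1 := by omega
      funext k
      fin_cases k <;> assumption
    have := Finset.card_le_card_of_injOn F hmem hinj
    omega
def ww (R r : ℕ) : ℝ := dd R r ^ 2 + (if r = 0 then 0 else dd R (r - 1) ^ 2)

lemma ww_nonneg (R r : ℕ) : 0 ≤ ww R r := by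
  unfold ww; split <;> positivity

lemma step_bound (R : ℕ) (m : Zlat ν) (i : Fin ν) :
    (gg R (normOne (m + unitVec ν i)) - gg R (normOne m)) ^ 2 ≤ ww R (normOne m) := by
  rcases normOne_step m i with h | h
  · rw [h]
    have hstep := gg_step R (normOne m)
    have h1 : (gg R (normOne m + 1) - gg R (normOne m)) ^ 2 = dd R (normOne m) ^ 2 := by
      rw [show gg R (normOne m + 1) - gg R (normOne m) = -dd R (normOne m) by linarith]
      ring
    rw [h1]
    unfold ww
    split
    · linarith
    · nlinarith [sq_nonneg (dd R (normOne m - 1))]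
  · set r' := normOne (m + unitVec ν i) with hr'
    have hm : normOne m = r' + 1 := by omega
    rw [hm]
    have hstep := gg_step R r'
    unfold ww
    rw [if_neg (by omega : ¬(r' + 1 = 0))]
    have he : r' + 1 - 1 = r' := rfl
    rw [he, show gg R r' - gg R (r' + 1) = dd R r' from hstep]
    nlinarith [sq_nonneg (dd R (r' + 1))]

lemma sum_fiber_le (hν : ν = 1 ∨ ν = 2) (B : Finset (Zlat ν)) (RR : ℕ)
    (hB : ∀ m ∈ B, normOne m < RR) (w : ℕ → ℝ) (hw : ∀ r, 0 ≤ w r) :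
    ∑ m ∈ B, w (normOne m) ≤ ∑ r ∈ Finset.range RR, (4 * (r : ℝ) + 2) * w r := by
  classical
  rw [← Finset.sum_fiberwise_of_maps_to (g := normOne)
    (fun m hm => Finset.mem_range.2 (hB m hm)) (fun m => w (normOne m))]
  refine Finset.sum_le_sum fun r _ => ?_
  have hcongr : ∑ m ∈ B.filter (fun m => normOne m = r), w (normOne m)
      = ((B.filter (fun m => normOne m = r)).card : ℝ) * w r := by
    rw [Finset.sum_congr rfl (fun m hm => by rw [(Finset.mem_filter.1 hm).2]),
      Finset.sum_const, nsmul_eq_mul]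
  rw [hcongr]
  have hcard := card_sphere_le hν r (B.filter (fun m => normOne m = r))
    (fun m hm => (Finset.mem_filter.1 hm).2)
  have hc : ((B.filter (fun m => normOne m = r)).card : ℝ) ≤ 4 * (r : ℝ) + 2 := by
    exact_mod_cast hcard
  exact mul_le_mul_of_nonneg_right hc (hw r)

def box (ν R : ℕ) : Finset (Zlat ν) := Fintype.piFinset (fun _ => Finset.Icc (-(R:ℤ)) R)

lemma notmem_box (R : ℕ) (m : Zlat ν) (h : m ∉ box ν R) : R + 1 ≤ normOne m := by
  rw [box, Fintype.mem_piFinset] at h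
  push_neg at h
  obtain ⟨i, hi⟩ := h
  rw [Finset.mem_Icc] at hi
  have h1 : R + 1 ≤ (m i).natAbs := by omega
  exact le_trans h1 (le_normOne m i)

lemma mem_box_norm (R : ℕ) (m : Zlat ν) (h : m ∈ box ν R) (hν2 : ν ≤ 2) :
    normOne m ≤ 2 * R := by
  rw [box, Fintype.mem_piFinset] at h
  have h1 : normOne m ≤ ν * R := by
    rw [normOne]
    calc ∑ i, (m i).natAbs ≤ ∑ _i : Fin ν, R := by
          refine Finset.sum_le_sum fun i _ => ?_
          have := h i
          rw [Finset.mem_Icc] at this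
          omega
      _ = ν * R := by rw [Finset.sum_const, Finset.card_univ, Fintype.card_fin, smul_eq_mul]
  calc normOne m ≤ ν * R := h1
    _ ≤ 2 * R := Nat.mul_le_mul_right R hν2

lemma sum_dd_eq (R M : ℕ) (h : R ≤ M) : ∑ r ∈ Finset.range M, dd R r = gg R 0 := by
  unfold gg
  rw [Finset.range_eq_Ico]
  symm
  refine Finset.sum_subset (Finset.Ico_subset_Ico (le_refl 0) h) fun x _ hx => ?_
  rw [Finset.mem_Ico] at hx
  unfold dd
  rw [if_pos (Or.inr (by omega))]

lemma dd_key (R r : ℕ) (a b : ℝ) (ha : 0 ≤ a) (har : b ≤ a * ((r:ℝ) + 1)) :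
    b * dd R r ^ 2 ≤ a * dd R r := by
  have h0 := dd_nonneg R r
  have h1 := dd_le R r
  have hr1 : (0:ℝ) < (r:ℝ) + 1 := by positivity
  have key : dd R r * ((r:ℝ) + 1) ≤ 1 := by
    calc dd R r * ((r:ℝ) + 1) ≤ ((r:ℝ) + 1)⁻¹ * ((r:ℝ) + 1) :=
          mul_le_mul_of_nonneg_right h1 (le_of_lt hr1)
      _ = 1 := inv_mul_cancel₀ (ne_of_gt hr1)
  nlinarith [mul_le_mul_of_nonneg_left key (mul_nonneg ha h0), sq_nonneg (dd R r),
    mul_le_mul_of_nonneg_right har (sq_nonneg (dd R r))]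

lemma Dcen_le (hν : ν = 1 ∨ ν = 2) (R : ℕ) (i : Fin ν) :
    ∑' m : Zlat ν, (gg R (normOne (m + unitVec ν i)) - gg R (normOne m)) ^ 2
      ≤ 10 * gg R 0 := by
  have hν2 : ν ≤ 2 := by rcases hν with h | h <;> omega
  have hzero : ∀ m ∉ box ν R,
      (gg R (normOne (m + unitVec ν i)) - gg R (normOne m)) ^ 2 = 0 := by
    intro m hm
    have h1 : R + 1 ≤ normOne m := notmem_box R m hm
    have h2 : R ≤ normOne (m + unitVec ν i) := by
      rcases normOne_step m i with h | h <;> omega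
    rw [gg_of_le R _ h2, gg_of_le R _ (by omega)]
    ring
  rw [tsum_eq_sum hzero]
  have step1 : ∑ m ∈ box ν R, (gg R (normOne (m + unitVec ν i)) - gg R (normOne m)) ^ 2
      ≤ ∑ m ∈ box ν R, ww R (normOne m) :=
    Finset.sum_le_sum fun m _ => step_bound R m i
  have step2 : ∑ m ∈ box ν R, ww R (normOne m)
      ≤ ∑ r ∈ Finset.range (2 * R + 1), (4 * (r : ℝ) + 2) * ww R r :=
    sum_fiber_le hν _ _ (fun m hm => by have := mem_box_norm R m hm hν2; omega) _
      (ww_nonneg R)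
  have step3 : ∑ r ∈ Finset.range (2 * R + 1), (4 * (r : ℝ) + 2) * ww R r
      ≤ 10 * gg R 0 := by
    have hsplit : ∀ r : ℕ, (4 * (r : ℝ) + 2) * ww R r
        = (4 * (r : ℝ) + 2) * dd R r ^ 2
          + (4 * (r : ℝ) + 2) * (if r = 0 then 0 else dd R (r - 1) ^ 2) := by
      intro r; unfold ww; ring
    rw [Finset.sum_congr rfl fun r _ => hsplit r, Finset.sum_add_distrib]
    have hA : ∑ r ∈ Finset.range (2 * R + 1), (4 * (r : ℝ) + 2) * dd R r ^ 2
        ≤ 4 * gg R 0 := by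
      calc ∑ r ∈ Finset.range (2 * R + 1), (4 * (r : ℝ) + 2) * dd R r ^ 2
          ≤ ∑ r ∈ Finset.range (2 * R + 1), 4 * dd R r := by
            refine Finset.sum_le_sum fun r _ => dd_key R r 4 _ (by norm_num)
              (by have := Nat.cast_nonneg (α := ℝ) r; linarith)
        _ = 4 * ∑ r ∈ Finset.range (2 * R + 1), dd R r := by rw [Finset.mul_sum]
        _ = 4 * gg R 0 := by rw [sum_dd_eq R _ (by omega)]
    have hB : ∑ r ∈ Finset.range (2 * R + 1),
          (4 * (r : ℝ) + 2) * (if r = 0 then 0 else dd R (r - 1) ^ 2) ≤ 6 * gg R 0 := by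
      rw [Finset.sum_range_succ']
      have h0 : (4 * ((0:ℕ) : ℝ) + 2) * (if (0:ℕ) = 0 then (0:ℝ) else dd R (0 - 1) ^ 2) = 0 := by
        simp
      rw [h0, add_zero]
      have hterm : ∀ r : ℕ, (4 * ((r + 1 : ℕ) : ℝ) + 2)
            * (if (r + 1 : ℕ) = 0 then (0:ℝ) else dd R (r + 1 - 1) ^ 2)
          = (4 * (r:ℝ) + 6) * dd R r ^ 2 := by
        intro r
        rw [if_neg (by omega : ¬(r + 1 = 0))]
        push_cast
        ring_nf
      rw [Finset.sum_congr rfl fun r _ => hterm r]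
      calc ∑ r ∈ Finset.range (2 * R), (4 * (r:ℝ) + 6) * dd R r ^ 2
          ≤ ∑ r ∈ Finset.range (2 * R), 6 * dd R r := by
            refine Finset.sum_le_sum fun r _ => dd_key R r 6 _ (by norm_num)
              (by have := Nat.cast_nonneg (α := ℝ) r; linarith)
        _ = 6 * ∑ r ∈ Finset.range (2 * R), dd R r := by rw [Finset.mul_sum]
        _ = 6 * gg R 0 := by rw [sum_dd_eq R _ (by omega)]
    linarith
  linarith
open Filter in
lemma exists_R (M : ℝ) : ∃ R : ℕ, M ≤ gg R 0 := by
  have ht := Real.tendsto_sum_range_one_div_nat_succ_atTop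
  obtain ⟨R, hR⟩ := (ht.eventually_ge_atTop (M + 1)).exists
  refine ⟨R, ?_⟩
  have hterm : ∀ k ∈ Finset.range R, (1 / ((k:ℝ) + 1)) - (if k = 0 then 1 else 0) ≤ dd R k := by
    intro k hk
    rw [Finset.mem_range] at hk
    by_cases h0 : k = 0
    · subst h0
      simp only [if_pos rfl]
      norm_num
      exact dd_nonneg R 0
    · rw [if_neg h0]
      unfold dd
      rw [if_neg (by omega)]
      rw [one_div]
      linarith [le_refl (((k:ℝ)+1)⁻¹)]
  have hsum := Finset.sum_le_sum hterm
  rw [Finset.sum_sub_distrib] at hsum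
  have hite : ∑ k ∈ Finset.range R, (if k = 0 then (1:ℝ) else 0) ≤ 1 := by
    rw [Finset.sum_ite_eq' (Finset.range R) 0 (fun _ => (1:ℝ))]
    split <;> norm_num
  rw [sum_dd_eq R R (le_refl R)] at hsum
  linarith


/-- the radial test function centered at `n₀` -/
def psi (n₀ : Zlat ν) (R : ℕ) : Zlat ν → ℝ := fun n => gg R (normOne (n - n₀))

def suppPsi (n₀ : Zlat ν) (R : ℕ) : Finset (Zlat ν) :=
  Fintype.piFinset (fun i => Finset.Icc (n₀ i - R) (n₀ i + R))

lemma psi_supp (n₀ : Zlat ν) (R : ℕ) : ∀ n ∉ suppPsi n₀ R, psi n₀ R n = 0 := by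
  intro n hn
  rw [suppPsi, Fintype.mem_piFinset] at hn
  push_neg at hn
  obtain ⟨i, hi⟩ := hn
  rw [Finset.mem_Icc] at hi
  have h1 : R + 1 ≤ ((n - n₀) i).natAbs := by
    have : (n - n₀) i = n i - n₀ i := rfl
    rw [this]; omega
  have h2 : R ≤ normOne (n - n₀) := le_trans (by omega) (le_normOne (n - n₀) i)
  rw [psi, gg_of_le R _ h2]

lemma n0_mem_suppPsi (n₀ : Zlat ν) (R : ℕ) : n₀ ∈ suppPsi n₀ R := by
  rw [suppPsi, Fintype.mem_piFinset]
  intro i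
  rw [Finset.mem_Icc]
  omega

lemma psi_n0 (n₀ : Zlat ν) (R : ℕ) : psi n₀ R n₀ = gg R 0 := by
  rw [psi, sub_self, normOne_zero]

lemma psi_n0_add (n₀ : Zlat ν) (R : ℕ) (i : Fin ν) :
    psi n₀ R (n₀ + unitVec ν i) = gg R 0 := by
  rw [psi, add_sub_cancel_left, normOne_unitVec, gg_one]

lemma psi_n0_sub (n₀ : Zlat ν) (R : ℕ) (i : Fin ν) :
    psi n₀ R (n₀ - unitVec ν i) = gg R 0 := by
  rw [psi, sub_sub_cancel_left, normOne_neg, normOne_unitVec, gg_one]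

lemma add_unitVec_ne (x : Zlat ν) (i : Fin ν) : x + unitVec ν i ≠ x := by
  intro h
  have h2 := congrFun h i
  have h3 : (x + unitVec ν i) i = x i + 1 := by simp [unitVec]
  rw [h3] at h2
  omega

lemma D_psi_le (hν : ν = 1 ∨ ν = 2) (n₀ : Zlat ν) (R : ℕ) :
    ∑ i : Fin ν, ∑' n, (psi n₀ R (n + unitVec ν i) - psi n₀ R n) ^ 2 ≤ 20 * gg R 0 := by
  have hν2 : (ν : ℝ) ≤ 2 := by rcases hν with h | h <;> (rw [h]; norm_num)
  have heach : ∀ i : Fin ν, ∑' n, (psi n₀ R (n + unitVec ν i) - psi n₀ R n) ^ 2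
      ≤ 10 * gg R 0 := by
    intro i
    have hre : ∑' n, (psi n₀ R (n + unitVec ν i) - psi n₀ R n) ^ 2
        = ∑' m : Zlat ν, (gg R (normOne (m + unitVec ν i)) - gg R (normOne m)) ^ 2 := by
      rw [← tsum_shift (fun m => (gg R (normOne (m + unitVec ν i)) - gg R (normOne m)) ^ 2)
        (-n₀)]
      refine tsum_congr fun n => ?_
      have e1 : n + unitVec ν i - n₀ = n + -n₀ + unitVec ν i := by abel
      have e2 : n - n₀ = n + -n₀ := by abel
      rw [psi, psi, e1, e2]
    rw [hre]
    exact Dcen_le hν R i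
  calc ∑ i : Fin ν, ∑' n, (psi n₀ R (n + unitVec ν i) - psi n₀ R n) ^ 2
      ≤ ∑ _i : Fin ν, 10 * gg R 0 := Finset.sum_le_sum fun i _ => heach i
    _ = (ν : ℝ) * (10 * gg R 0) := by
        rw [Finset.sum_const, Finset.card_univ, Fintype.card_fin, nsmul_eq_mul]
    _ ≤ 2 * (10 * gg R 0) := by
        have := gg_nonneg R 0
        nlinarith
    _ = 20 * gg R 0 := by ring
def bigS (n₀ : Zlat ν) (R : ℕ) : Finset (Zlat ν) :=
  Fintype.piFinset (fun i => Finset.Icc (n₀ i - (R + 1)) (n₀ i + (R + 1)))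

lemma Ddiff_supp (n₀ : Zlat ν) (R : ℕ) (i : Fin ν) :
    ∀ n ∉ bigS n₀ R, (psi n₀ R (n + unitVec ν i) - psi n₀ R n) ^ 2 = 0 := by
  intro n hn
  rw [bigS, Fintype.mem_piFinset] at hn
  push_neg at hn
  obtain ⟨i0, hi0⟩ := hn
  rw [Finset.mem_Icc] at hi0
  have h1 : R + 2 ≤ ((n - n₀) i0).natAbs := by
    have : (n - n₀) i0 = n i0 - n₀ i0 := rfl
    rw [this]; omega
  have h2 : R + 2 ≤ normOne (n - n₀) := le_trans (by omega) (le_normOne (n - n₀) i0)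
  have h3 : R ≤ normOne ((n - n₀) + unitVec ν i) := by
    rcases normOne_step (n - n₀) i with h | h <;> omega
  have e1 : n + unitVec ν i - n₀ = (n - n₀) + unitVec ν i := by abel
  rw [psi, psi, e1, gg_of_le R _ h3, gg_of_le R _ (by omega)]
  ring

lemma P_ft (V : Zlat ν → ℝ) (n₀ : Zlat ν) (R : ℕ) (t : ℝ) :
    ∑' n, V n * (psi n₀ R n + (if n = n₀ then t else 0)) ^ 2
      = (∑' n, V n * psi n₀ R n ^ 2) + (2 * gg R 0 * t + t ^ 2) * V n₀ := by
  classical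
  have hA : Summable (fun n => V n * psi n₀ R n ^ 2) :=
    summable_of_finsupp (suppPsi n₀ R) (fun n hn => by rw [psi_supp n₀ R n hn]; ring)
  have hB : Summable (fun n : Zlat ν => if n = n₀ then (2 * gg R 0 * t + t ^ 2) * V n₀ else 0) :=
    summable_of_finsupp {n₀} (fun n hn => if_neg (by simpa using hn))
  have hpt : ∀ n, V n * (psi n₀ R n + (if n = n₀ then t else 0)) ^ 2
      = V n * psi n₀ R n ^ 2 + (if n = n₀ then (2 * gg R 0 * t + t ^ 2) * V n₀ else 0) := by
    intro n
    by_cases h : n = n₀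
    · subst h; rw [if_pos rfl, if_pos rfl, psi_n0]; ring
    · rw [if_neg h, if_neg h]; ring
  rw [tsum_congr hpt, Summable.tsum_add hA hB, tsum_ite_eq]

lemma D_ft (n₀ : Zlat ν) (R : ℕ) (t : ℝ) (i : Fin ν) :
    ∑' n, ((psi n₀ R (n + unitVec ν i) + (if n + unitVec ν i = n₀ then t else 0))
        - (psi n₀ R n + (if n = n₀ then t else 0))) ^ 2
      = (∑' n, (psi n₀ R (n + unitVec ν i) - psi n₀ R n) ^ 2) + 2 * t ^ 2 := by
  classical
  have hA : Summable (fun n => (psi n₀ R (n + unitVec ν i) - psi n₀ R n) ^ 2) :=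
    summable_of_finsupp (bigS n₀ R) (Ddiff_supp n₀ R i)
  have hB : Summable (fun n : Zlat ν => if n = n₀ then t ^ 2 else 0) :=
    summable_of_finsupp {n₀} (fun n hn => if_neg (by simpa using hn))
  have hC : Summable (fun n : Zlat ν => if n = n₀ - unitVec ν i then t ^ 2 else 0) :=
    summable_of_finsupp {n₀ - unitVec ν i} (fun n hn => if_neg (by simpa using hn))
  have hpt : ∀ n, ((psi n₀ R (n + unitVec ν i) + (if n + unitVec ν i = n₀ then t else 0))
        - (psi n₀ R n + (if n = n₀ then t else 0))) ^ 2
      = (psi n₀ R (n + unitVec ν i) - psi n₀ R n) ^ 2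
        + ((if n = n₀ then t ^ 2 else 0) + (if n = n₀ - unitVec ν i then t ^ 2 else 0)) := by
    intro n
    by_cases h1 : n = n₀
    · subst h1
      have hne1 : n + unitVec ν i ≠ n := add_unitVec_ne n i
      have hne2 : n ≠ n - unitVec ν i := by
        intro h
        have : (n - unitVec ν i) + unitVec ν i = n := sub_add_cancel _ _
        rw [← h] at this
        exact add_unitVec_ne n i this
      rw [if_pos rfl, if_neg hne1, if_pos rfl, if_neg hne2]
      rw [psi_n0, psi_n0_add]
      ring
    · by_cases h2 : n = n₀ - unitVec ν i
      · have hnu : n + unitVec ν i = n₀ := by rw [h2]; exact sub_add_cancel _ _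
        rw [if_pos hnu, if_neg h1, if_neg h1, if_pos h2, hnu, h2]
        rw [psi_n0, psi_n0_sub]
        ring
      · have hnu : n + unitVec ν i ≠ n₀ := by
          intro h
          exact h2 (by rw [← h, add_sub_cancel_right])
        rw [if_neg hnu, if_neg h1, if_neg h1, if_neg h2]
        ring
  rw [tsum_congr hpt, Summable.tsum_add hA (hB.add hC), Summable.tsum_add hB hC, tsum_ite_eq, tsum_ite_eq]
  ring
/-- Theorem 4.5: for `ν ∈ {1,2}`, if `σ(H₀+V) ⊆ [-2ν, 2ν]` then `V = 0`. -/
theorem statement12 (ν : ℕ) (hν : ν = 1 ∨ ν = 2) (V : Zlat ν → ℝ) (C : ℝ)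
    (hC : ∀ n, |V n| ≤ C)
    (hspec : spectrum ℂ (schrodinger ν V C hC) ⊆
      (fun x : ℝ => (x : ℂ)) '' Set.Icc (-(2 * (ν:ℝ))) (2 * (ν:ℝ))) :
    ∀ n, V n = 0 := by
  classical
  intro n₀
  by_contra hV0
  have ha0 : 0 < |V n₀| := abs_pos.2 hV0
  set a := |V n₀| with hadef
  obtain ⟨R, hR⟩ := exists_R (1 + 320 / a ^ 2)
  set c := gg R 0 with hcdef
  have hc0 : 0 < c := lt_of_lt_of_le (by positivity) hR
  set t := a * c / 8 with htdef
  have ht0 : 0 < t := by rw [htdef]; positivity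
  set f : Zlat ν → ℝ := fun n => psi n₀ R n + (if n = n₀ then t else 0) with hfdef
  have hfsupp : ∀ n ∉ suppPsi n₀ R, f n = 0 := by
    intro n hn
    have hne : n ≠ n₀ := fun h => hn (h ▸ n0_mem_suppPsi n₀ R)
    rw [hfdef]
    simp only
    rw [psi_supp n₀ R n hn, if_neg hne, add_zero]
  have h1 := abs_P_le_D V C hC hspec f (suppPsi n₀ R) hfsupp
  have h2 := abs_P_le_D V C hC hspec (psi n₀ R) (suppPsi n₀ R) (psi_supp n₀ R)
  have hP : ∑' n, V n * f n ^ 2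
      = (∑' n, V n * psi n₀ R n ^ 2) + (2 * c * t + t ^ 2) * V n₀ := P_ft V n₀ R t
  have hDf : ∑ i : Fin ν, ∑' n, (f (n + unitVec ν i) - f n) ^ 2
      = (∑ i : Fin ν, ∑' n, (psi n₀ R (n + unitVec ν i) - psi n₀ R n) ^ 2)
        + (ν : ℝ) * (2 * t ^ 2) := by
    rw [Finset.sum_congr rfl fun i _ => D_ft n₀ R t i, Finset.sum_add_distrib,
      Finset.sum_const, Finset.card_univ, Fintype.card_fin, nsmul_eq_mul]
  rw [hP, hDf] at h1
  have hDψ := D_psi_le hν n₀ R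
  have hν2 : (ν : ℝ) ≤ 2 := by rcases hν with h | h <;> (rw [h]; norm_num)
  have habs : (2 * c * t + t ^ 2) * a ≤ 40 * c + 4 * t ^ 2 := by
    calc (2 * c * t + t ^ 2) * a = |(2 * c * t + t ^ 2) * V n₀| := by
          rw [abs_mul, _root_.abs_of_nonneg
            (by positivity : (0:ℝ) ≤ 2 * c * t + t ^ 2), ← hadef]
      _ = |((∑' n, V n * psi n₀ R n ^ 2) + (2 * c * t + t ^ 2) * V n₀)
            - (∑' n, V n * psi n₀ R n ^ 2)| := by rw [add_sub_cancel_left]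
      _ ≤ |(∑' n, V n * psi n₀ R n ^ 2) + (2 * c * t + t ^ 2) * V n₀|
            + |∑' n, V n * psi n₀ R n ^ 2| := abs_sub _ _
      _ ≤ ((∑ i : Fin ν, ∑' n, (psi n₀ R (n + unitVec ν i) - psi n₀ R n) ^ 2)
            + (ν : ℝ) * (2 * t ^ 2))
          + (∑ i : Fin ν, ∑' n, (psi n₀ R (n + unitVec ν i) - psi n₀ R n) ^ 2) :=
          add_le_add h1 h2
      _ ≤ 40 * c + 4 * t ^ 2 := by nlinarith [hDψ, hν2, sq_nonneg t]
  rw [htdef] at habs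
  have h320 : a ^ 2 * (320 / a ^ 2) = 320 := by field_simp
  have hac : a ^ 2 + 320 ≤ a ^ 2 * c := by
    have := mul_le_mul_of_nonneg_left hR (sq_nonneg a)
    calc a ^ 2 + 320 = a ^ 2 * 1 + a ^ 2 * (320 / a ^ 2) := by rw [h320]; ring
      _ = a ^ 2 * (1 + 320 / a ^ 2) := by ring
      _ ≤ a ^ 2 * c := this
  nlinarith [habs, hac, hc0, ha0, mul_le_mul_of_nonneg_right hac (le_of_lt hc0),
    mul_pos ha0 hc0, mul_pos (mul_pos ha0 ha0) hc0,
    mul_pos (mul_pos (mul_pos ha0 ha0) ha0) (mul_pos hc0 hc0)]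

end DHKS
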